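/- arXiv:1602.04472 — 2 statements merged into one kernel-verified Lean document; each statement's English description precedes it below -/
import Mathlib

section
/- Let n ≥ 0 and let a be a non-inflexional parametrised arc in ℂ^{n+1} (so the wronskian W_a is a unit of ℂ[[t]]). For 1 ≤ i ≤ n+1, set p_i := (−1)^i · i! · D_i / W_a ∈ ℂ[[t]], where D_i := det(a^{[0]}, …, a^{[n−i]}, a^{[n−i+2]}, …, a^{[n+1]}) is the determinant of the matrix of divided derivatives a^{[0]},…,a^{[n+1]} with a^{[n+1−i]} omitted. Then every coordinate x = a^k of the arc satisfies the linear differential equation x^{(n+1)} + Σ_{i=1}^{n+1} (n+1 choose i) · p_i · x^{(n+1−i)} = 0 in ℂ[[t]]. -/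
open PowerSeries

noncomputable section

/-- The `i`-th divided derivative `(1/i!)·f⁽ⁱ⁾` of a formal power series. -/
def dDeriv (i : ℕ) (f : ℂ⟦X⟧) : ℂ⟦X⟧ :=
  (Nat.factorial i : ℂ)⁻¹ • (⇑(PowerSeries.derivative ℂ))^[i] f

/-- The wronskian of a parametrised arc in `ℂ^N`. -/
def wrons {N : ℕ} (a : Fin N → ℂ⟦X⟧) : ℂ⟦X⟧ :=
  Matrix.det (Matrix.of fun i j : Fin N => dDeriv (j : ℕ) (a i))

/-- A parametrised arc is non-inflexional if its wronskian is a unit of `ℂ⟦t⟧`. -/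
def NonInflexional {N : ℕ} (a : Fin N → ℂ⟦X⟧) : Prop :=
  PowerSeries.constantCoeff (wrons a) ≠ 0

/-- Composition `g ∘ φ` of formal power series (meaningful when `φ(0) = 0`). -/
def pscomp (φ g : ℂ⟦X⟧) : ℂ⟦X⟧ :=
  PowerSeries.mk fun m =>
    PowerSeries.coeff m
      (∑ k ∈ Finset.range (m + 1), PowerSeries.C (PowerSeries.coeff k g) * φ ^ k)

/-- `c` is a normalization of the arc `a`: `c(t) = u(t)·(g·a)(φ(t))` with `g ∈ GL_N(ℂ)`,
`u` a unit of `ℂ⟦t⟧`, `φ(0) = 0`, `φ′(0) ≠ 0`. -/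
def IsNormalization {N : ℕ} (a c : Fin N → ℂ⟦X⟧) : Prop :=
  ∃ (g : Matrix (Fin N) (Fin N) ℂ) (u φ : ℂ⟦X⟧),
    IsUnit g.det ∧ IsUnit u ∧ PowerSeries.constantCoeff φ = 0 ∧
    PowerSeries.coeff 1 φ ≠ 0 ∧
    ∀ i, c i = u * pscomp φ (∑ j, g i j • a j)

/-- `f ≡ g (mod t^m)`. -/
def ModEq (f g : ℂ⟦X⟧) (m : ℕ) : Prop := ∀ j < m, PowerSeries.coeff j (f - g) = 0

/-- The determinant `det(a_{e 0}, a_{e 1}, …, a_{e n})` of coefficient vectors of the arc `a`. -/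
def Umin {n : ℕ} (e : Fin (n + 1) → ℕ) (a : Fin (n + 1) → ℂ⟦X⟧) : ℂ :=
  Matrix.det (Matrix.of fun i j => PowerSeries.coeff (e j) (a i))

/-- `U = U_{(0)}`. -/
def U0 {n : ℕ} (a : Fin (n + 1) → ℂ⟦X⟧) : ℂ := Umin (fun j => (j : ℕ)) a
/-- `U₁ = U_{(1)}`. -/
def U1 {n : ℕ} (a : Fin (n + 1) → ℂ⟦X⟧) : ℂ :=
  Umin (fun j => if (j : ℕ) = n then n + 1 else (j : ℕ)) a
/-- `U₂ = U_{(2)}`. -/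
def U2 {n : ℕ} (a : Fin (n + 1) → ℂ⟦X⟧) : ℂ :=
  Umin (fun j => if (j : ℕ) = n then n + 2 else (j : ℕ)) a
/-- `U₃ = U_{(3)}`. -/
def U3 {n : ℕ} (a : Fin (n + 1) → ℂ⟦X⟧) : ℂ :=
  Umin (fun j => if (j : ℕ) = n then n + 3 else (j : ℕ)) a
/-- `U₁₁ = U_{(1,1)}`. -/
def U11 {n : ℕ} (a : Fin (n + 1) → ℂ⟦X⟧) : ℂ :=
  Umin (fun j => if n - 1 ≤ (j : ℕ) then (j : ℕ) + 1 else (j : ℕ)) a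
/-- `U₂₁ = U_{(2,1)}`. -/
def U21 {n : ℕ} (a : Fin (n + 1) → ℂ⟦X⟧) : ℂ :=
  Umin (fun j => if (j : ℕ) = n then n + 2 else if (j : ℕ) = n - 1 then n else (j : ℕ)) a
/-- `U₁₁₁ = U_{(1,1,1)}`. -/
def U111 {n : ℕ} (a : Fin (n + 1) → ℂ⟦X⟧) : ℂ :=
  Umin (fun j => if n - 2 ≤ (j : ℕ) then (j : ℕ) + 1 else (j : ℕ)) a

/-- The Monge expression `U²(U₃+2U₂₁−2U₁₁₁) − 3UU₁(U₁₁+U₂) + 2U₁³` of an arc. -/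
def MongeExpr {n : ℕ} (a : Fin (n + 1) → ℂ⟦X⟧) : ℂ :=
  U0 a ^ 2 * (U3 a + 2 * U21 a - 2 * U111 a) - 3 * U0 a * U1 a * (U11 a + U2 a) + 2 * U1 a ^ 3

end

lemma scal_id (n i : ℕ) (h2 : i ≤ n + 1) :
    ((n + 1).choose i : ℂ) * ((-1) ^ i * (Nat.factorial i : ℂ)) =
      ((n + 1).factorial : ℂ) * (-1) ^ (n + 1 + (n + 1 - i)) *
        ((Nat.factorial (n + 1 - i) : ℂ))⁻¹ := by
  have he : n + 1 + (n + 1 - i) = i + 2 * (n + 1 - i) := by omega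
  rw [he, pow_add, pow_mul, neg_one_sq, one_pow, mul_one]
  have hfac := Nat.choose_mul_factorial_mul_factorial h2
  have hfacC : ((n + 1).choose i : ℂ) * (Nat.factorial i : ℂ) *
      (Nat.factorial (n + 1 - i) : ℂ) = ((n + 1).factorial : ℂ) := by
    exact_mod_cast congrArg (Nat.cast : ℕ → ℂ) hfac
  have hne : (Nat.factorial (n + 1 - i) : ℂ) ≠ 0 := by
    exact_mod_cast Nat.factorial_ne_zero _
  field_simp
  ring_nf
  ring_nf at hfacC
  linear_combination hfacC

open PowerSeries in
/-- every coordinate of a non-inflexional arc in `ℂ^{n+1}` satisfies the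
linear differential equation `x^{(n+1)} + Σ_{i=1}^{n+1} C(n+1,i)·p_i·x^{(n+1−i)} = 0`,
where `p_i = (−1)^i·i!·D_i/W_a` and `D_i` is the wronskian-type determinant with the
column `a^{[n+1−i]}` omitted. -/
theorem arc_satisfies_linear_ode
    (n : ℕ) (a : Fin (n + 1) → ℂ⟦X⟧) (ha : NonInflexional a)
    (p : ℕ → ℂ⟦X⟧)
    (hp : ∀ (i : ℕ) (hi1 : 1 ≤ i) (hi2 : i ≤ n + 1),
      p i = ((-1 : ℂ) ^ i * (Nat.factorial i : ℂ)) •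
        (Matrix.det (Matrix.of fun (r j : Fin (n + 1)) =>
            dDeriv ((((⟨n + 1 - i, by omega⟩ : Fin (n + 2)).succAbove j) : Fin (n + 2)) : ℕ)
              (a r)) *
          (wrons a)⁻¹)) :
    ∀ k : Fin (n + 1),
      (⇑(PowerSeries.derivative ℂ))^[n + 1] (a k) +
        ∑ i ∈ Finset.Icc 1 (n + 1), ((n + 1).choose i : ℂ⟦X⟧) * p i *
          (⇑(PowerSeries.derivative ℂ))^[n + 1 - i] (a k) = 0 := by
  intro k
  have hW : PowerSeries.constantCoeff (wrons a) ≠ 0 := ha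
  have hWW : (wrons a)⁻¹ * wrons a = 1 := PowerSeries.inv_mul_cancel _ hW
  set M : Matrix (Fin (n + 2)) (Fin (n + 2)) ℂ⟦X⟧ :=
    Matrix.of fun r c => dDeriv (c : ℕ) ((Fin.snoc a (a k) : Fin (n + 2) → ℂ⟦X⟧) r) with hM
  have hne : (Fin.castSucc k) ≠ Fin.last (n + 1) := (Fin.castSucc_lt_last k).ne
  have hrow : M (Fin.castSucc k) = M (Fin.last (n + 1)) := by
    funext c
    simp [hM, Fin.snoc_castSucc, Fin.snoc_last]
  have hdet : M.det = 0 := Matrix.det_zero_of_row_eq hne hrow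
  rw [Matrix.det_succ_row M (Fin.last (n + 1))] at hdet
  set Δ : Fin (n + 2) → ℂ⟦X⟧ := fun j =>
    Matrix.det (Matrix.of fun (r c : Fin (n + 1)) =>
      dDeriv ((j.succAbove c : Fin (n + 2)) : ℕ) (a r)) with hΔ
  have hmin : ∀ j : Fin (n + 2),
      Matrix.det (M.submatrix (Fin.last (n + 1)).succAbove j.succAbove) = Δ j := by
    intro j
    show _ = Matrix.det (Matrix.of fun (r c : Fin (n + 1)) =>
      dDeriv ((j.succAbove c : Fin (n + 2)) : ℕ) (a r))
    congr 1
    funext r c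
    simp [hM, Fin.succAbove_last, Fin.snoc_castSucc]
  have hMlast : ∀ j : Fin (n + 2), M (Fin.last (n + 1)) j = dDeriv (j : ℕ) (a k) := by
    intro j
    simp [hM, Fin.snoc_last]
  simp only [hmin, hMlast, Fin.val_last] at hdet
  rw [Fin.sum_univ_castSucc] at hdet
  simp only [Fin.coe_castSucc, Fin.val_last] at hdet
  have hΔlast : Δ (Fin.last (n + 1)) = wrons a := by
    show Matrix.det (Matrix.of fun (r c : Fin (n + 1)) =>
      dDeriv (((Fin.last (n + 1)).succAbove c : Fin (n + 2)) : ℕ) (a r)) = wrons a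
    rw [wrons]
    congr 1
    funext r c
    simp [Fin.succAbove_last]
  -- per-term identity
  have hterm : ∀ i ∈ Finset.Icc 1 (n + 1),
      ((n + 1).choose i : ℂ⟦X⟧) * p i *
          (⇑(PowerSeries.derivative ℂ))^[n + 1 - i] (a k) =
        PowerSeries.C ((n + 1).factorial : ℂ) * (wrons a)⁻¹ *
          ((-1) ^ (n + 1 + (n + 1 - i)) * dDeriv (n + 1 - i) (a k) *
            Δ (⟨n + 1 - i, by omega⟩ : Fin (n + 2))) := by
    intro i hi
    rw [Finset.mem_Icc] at hi
    obtain ⟨hi1, hi2⟩ := hi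
    rw [hp i hi1 hi2]
    have hΔeq : Δ (⟨n + 1 - i, by omega⟩ : Fin (n + 2)) =
        Matrix.det (Matrix.of fun (r j : Fin (n + 1)) =>
          dDeriv ((((⟨n + 1 - i, by omega⟩ : Fin (n + 2)).succAbove j) : Fin (n + 2)) : ℕ)
            (a r)) := rfl
    rw [hΔeq]
    set Δ' := Matrix.det (Matrix.of fun (r j : Fin (n + 1)) =>
          dDeriv ((((⟨n + 1 - i, by omega⟩ : Fin (n + 2)).succAbove j) : Fin (n + 2)) : ℕ)
            (a r)) with hΔ'
    rw [smul_eq_C_mul, dDeriv, smul_eq_C_mul]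
    have hc1 : ((n + 1).choose i : ℂ⟦X⟧) = PowerSeries.C ((n + 1).choose i : ℂ) := by
      simp
    have hc2 : ((-1 : ℂ⟦X⟧)) ^ (n + 1 + (n + 1 - i)) =
        PowerSeries.C ((-1 : ℂ) ^ (n + 1 + (n + 1 - i))) := by
      simp
    rw [hc1, hc2]
    have hC := congrArg (PowerSeries.C) (scal_id n i hi2)
    simp only [map_mul] at hC ⊢
    linear_combination (Δ' * (wrons a)⁻¹ *
      (⇑(PowerSeries.derivative ℂ))^[n + 1 - i] (a k)) * hC
  rw [Finset.sum_congr rfl hterm, ← Finset.mul_sum]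
  -- reindex the Icc-sum to hdet's Fin-sum
  have hreindex : ∑ i ∈ Finset.Icc 1 (n + 1),
      ((-1 : ℂ⟦X⟧)) ^ (n + 1 + (n + 1 - i)) * dDeriv (n + 1 - i) (a k) *
        Δ (⟨n + 1 - i, by omega⟩ : Fin (n + 2)) =
      ∑ j : Fin (n + 1),
        ((-1 : ℂ⟦X⟧)) ^ (n + 1 + (j : ℕ)) * dDeriv (j : ℕ) (a k) * Δ (Fin.castSucc j) := by
    refine Finset.sum_bij' (fun i hi => (⟨n + 1 - i, by
        rw [Finset.mem_Icc] at hi; omega⟩ : Fin (n + 1)))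
      (fun j _ => n + 1 - (j : ℕ)) ?_ ?_ ?_ ?_ ?_
    · intro i hi; exact Finset.mem_univ _
    · intro j _
      beta_reduce
      rw [Finset.mem_Icc]
      have := j.isLt
      omega
    · intro i hi
      rw [Finset.mem_Icc] at hi
      beta_reduce
      show n + 1 - (n + 1 - i) = i
      omega
    · intro j _
      have := j.isLt
      apply Fin.ext
      show n + 1 - (n + 1 - (j : ℕ)) = (j : ℕ)
      omega
    · intro i hi
      rw [Finset.mem_Icc] at hi
      have h1 : ((⟨n + 1 - i, by omega⟩ : Fin (n + 1)) : ℕ) = n + 1 - i := rfl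
      have h2 : Fin.castSucc (⟨n + 1 - i, by omega⟩ : Fin (n + 1)) =
          (⟨n + 1 - i, by omega⟩ : Fin (n + 2)) := rfl
      rw [h1, h2]
  rw [hreindex]
  have hlast : (⇑(PowerSeries.derivative ℂ))^[n + 1] (a k) =
      PowerSeries.C ((n + 1).factorial : ℂ) * (wrons a)⁻¹ *
        ((-1 : ℂ⟦X⟧) ^ (n + 1 + (n + 1)) * dDeriv (n + 1) (a k) * Δ (Fin.last (n + 1))) := by
    rw [hΔlast, dDeriv, smul_eq_C_mul]
    have h1 : ((-1 : ℂ⟦X⟧)) ^ (n + 1 + (n + 1)) = 1 := by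
      rw [show n + 1 + (n + 1) = 2 * (n + 1) by ring, pow_mul, neg_one_sq, one_pow]
    rw [h1, one_mul]
    have hCC : PowerSeries.C ((n + 1).factorial : ℂ) *
        PowerSeries.C (((n + 1).factorial : ℂ))⁻¹ = 1 := by
      rw [← map_mul, mul_inv_cancel₀, map_one]
      exact_mod_cast Nat.factorial_ne_zero _
    calc (⇑(PowerSeries.derivative ℂ))^[n + 1] (a k)
        = (PowerSeries.C ((n + 1).factorial : ℂ) *
            PowerSeries.C (((n + 1).factorial : ℂ))⁻¹) *
          (((wrons a)⁻¹ * wrons a) * (⇑(PowerSeries.derivative ℂ))^[n + 1] (a k)) := by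
          rw [hCC, hWW]; ring
      _ = _ := by ring
  rw [hlast]
  linear_combination (PowerSeries.C ((n + 1).factorial : ℂ) * (wrons a)⁻¹) * hdet
end

section
/- Let a₂, a₃, a₄, a₅ ∈ ℂ with a₂ ≠ 0, and let f := a₂t² + a₃t³ + a₄t⁴ + a₅t⁵ ∈ ℂ[[t]]. Then there exists a nonzero quadratic form q(X,Y,Z) ∈ ℂ[X,Y,Z] (homogeneous of degree 2) such that q(1, t, f(t)) ≡ 0 (mod t⁶) if and only if 2a₃³ − 3a₂a₃a₄ + a₂²a₅ = 0. (The length-6 jet of the plane arc (1, t, f) lies on a conic exactly when the Monge invariant μ = −2a₃³ + 3a₂a₃a₄ − a₂²a₅ vanishes.) -/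
open PowerSeries

noncomputable section MongeAux

/-- The exponent finsupp of the monomial `X₀^i X₁^j X₂^k`. -/
def mon (i j k : ℕ) : Fin 3 →₀ ℕ :=
  Finsupp.single 0 i + Finsupp.single 1 j + Finsupp.single 2 k

lemma mon_apply0 (i j k : ℕ) : mon i j k 0 = i := by simp [mon, Finsupp.single_apply]
lemma mon_apply1 (i j k : ℕ) : mon i j k 1 = j := by simp [mon, Finsupp.single_apply]
lemma mon_apply2 (i j k : ℕ) : mon i j k 2 = k := by simp [mon, Finsupp.single_apply]

lemma mon_inj_iff {i j k i' j' k' : ℕ} :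
    mon i j k = mon i' j' k' ↔ i = i' ∧ j = j' ∧ k = k' := by
  constructor
  · intro h
    exact ⟨by simpa [mon_apply0] using DFunLike.congr_fun h 0,
      by simpa [mon_apply1] using DFunLike.congr_fun h 1,
      by simpa [mon_apply2] using DFunLike.congr_fun h 2⟩
  · rintro ⟨rfl, rfl, rfl⟩; rfl

lemma mon_rep (d : Fin 3 →₀ ℕ) : d = mon (d 0) (d 1) (d 2) := by
  ext x; fin_cases x <;> simp [mon, Finsupp.single_apply]

lemma deg3 (d : Fin 3 →₀ ℕ) : d.degree = d 0 + d 1 + d 2 := by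
  rw [Finsupp.degree_apply,
    Finset.sum_subset d.support.subset_univ
      (fun i _ h => Finsupp.notMem_support_iff.mp h)]
  simp [Fin.sum_univ_three]

lemma mon_degree (i j k : ℕ) : (mon i j k).degree = i + j + k := by
  rw [deg3, mon_apply0, mon_apply1, mon_apply2]

lemma homog2_decomp (q : MvPolynomial (Fin 3) ℂ) (h : q.IsHomogeneous 2) :
    q = MvPolynomial.monomial (mon 2 0 0) (MvPolynomial.coeff (mon 2 0 0) q)
      + MvPolynomial.monomial (mon 1 1 0) (MvPolynomial.coeff (mon 1 1 0) q)
      + MvPolynomial.monomial (mon 1 0 1) (MvPolynomial.coeff (mon 1 0 1) q)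
      + MvPolynomial.monomial (mon 0 2 0) (MvPolynomial.coeff (mon 0 2 0) q)
      + MvPolynomial.monomial (mon 0 1 1) (MvPolynomial.coeff (mon 0 1 1) q)
      + MvPolynomial.monomial (mon 0 0 2) (MvPolynomial.coeff (mon 0 0 2) q) := by
  ext d
  simp only [MvPolynomial.coeff_add, MvPolynomial.coeff_monomial]
  by_cases hdeg : d.degree = 2
  · have hd : d 0 + d 1 + d 2 = 2 := by rw [← deg3, hdeg]
    have hrep := mon_rep d
    have : (d 0 = 2 ∧ d 1 = 0 ∧ d 2 = 0) ∨ (d 0 = 1 ∧ d 1 = 1 ∧ d 2 = 0)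
        ∨ (d 0 = 1 ∧ d 1 = 0 ∧ d 2 = 1) ∨ (d 0 = 0 ∧ d 1 = 2 ∧ d 2 = 0)
        ∨ (d 0 = 0 ∧ d 1 = 1 ∧ d 2 = 1) ∨ (d 0 = 0 ∧ d 1 = 0 ∧ d 2 = 2) := by omega
    obtain ⟨h0,h1,h2⟩|⟨h0,h1,h2⟩|⟨h0,h1,h2⟩|⟨h0,h1,h2⟩|⟨h0,h1,h2⟩|⟨h0,h1,h2⟩ := this <;>
      rw [h0, h1, h2] at hrep <;> subst hrep <;>
      simp only [mon_inj_iff] <;> norm_num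
  · have hz : MvPolynomial.coeff d q = 0 := h.coeff_eq_zero hdeg
    rw [hz]
    have : ∀ i j k : ℕ, i + j + k = 2 → ¬ (mon i j k = d) := by
      rintro i j k hsum rfl
      rw [mon_degree] at hdeg
      omega
    rw [if_neg (this 2 0 0 rfl), if_neg (this 1 1 0 rfl), if_neg (this 1 0 1 rfl),
      if_neg (this 0 2 0 rfl), if_neg (this 0 1 1 rfl), if_neg (this 0 0 2 rfl)]
    simp

lemma monomial_mon_eq (i j k : ℕ) (c : ℂ) :
    MvPolynomial.monomial (mon i j k) c
      = MvPolynomial.C c * MvPolynomial.X 0 ^ i * MvPolynomial.X 1 ^ j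
        * MvPolynomial.X 2 ^ k := by
  rw [MvPolynomial.X_pow_eq_monomial, MvPolynomial.X_pow_eq_monomial,
    MvPolynomial.X_pow_eq_monomial, MvPolynomial.C_apply,
    MvPolynomial.monomial_mul, MvPolynomial.monomial_mul, MvPolynomial.monomial_mul]
  simp [mon]

lemma coeff_lt_six (c6 c7 c8 c9 c10 : ℂ) (j : ℕ) (hj : j < 6) :
    PowerSeries.coeff j (PowerSeries.C c6 * X ^ 6 + PowerSeries.C c7 * X ^ 7
      + PowerSeries.C c8 * X ^ 8 + PowerSeries.C c9 * X ^ 9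
      + PowerSeries.C c10 * X ^ 10) = 0 := by
  simp only [map_add, PowerSeries.coeff_C_mul, PowerSeries.coeff_X_pow]
  interval_cases j <;> norm_num

lemma aeval_mon (f : ℂ⟦X⟧) (i j k : ℕ) (c : ℂ) :
    MvPolynomial.aeval ![(1 : ℂ⟦X⟧), PowerSeries.X, f]
        (MvPolynomial.monomial (mon i j k) c)
      = PowerSeries.C c * PowerSeries.X ^ j * f ^ k := by
  rw [monomial_mon_eq]
  simp [MvPolynomial.algebraMap_eq, PowerSeries.algebraMap_apply]

end MongeAux

set_option maxHeartbeats 1600000 in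
open PowerSeries in
/-- the length-6 jet of the plane arc `(1, t, f)` with
`f = a₂t² + a₃t³ + a₄t⁴ + a₅t⁵`, `a₂ ≠ 0`, lies on a conic if and only if
`2a₃³ − 3a₂a₃a₄ + a₂²a₅ = 0`. -/
theorem jet_on_conic_iff_monge_invariant_vanishes
    (a2 a3 a4 a5 : ℂ) (ha2 : a2 ≠ 0)
    (f : ℂ⟦X⟧)
    (hf : f = PowerSeries.C a2 * PowerSeries.X ^ 2 + PowerSeries.C a3 * PowerSeries.X ^ 3
      + PowerSeries.C a4 * PowerSeries.X ^ 4 + PowerSeries.C a5 * PowerSeries.X ^ 5) :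
    (∃ q : MvPolynomial (Fin 3) ℂ, q ≠ 0 ∧ q.IsHomogeneous 2 ∧
        ∀ j < 6, PowerSeries.coeff j
          (MvPolynomial.aeval ![(1 : ℂ⟦X⟧), PowerSeries.X, f] q) = 0) ↔
      2 * a3 ^ 3 - 3 * a2 * a3 * a4 + a2 ^ 2 * a5 = 0 := by
  constructor
  · rintro ⟨q, hq0, hqh, hqc⟩
    by_contra hμ
    set A := MvPolynomial.coeff (mon 2 0 0) q with hA'
    set B := MvPolynomial.coeff (mon 1 1 0) q with hB'
    set Cc := MvPolynomial.coeff (mon 1 0 1) q with hC'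
    set D := MvPolynomial.coeff (mon 0 2 0) q with hD'
    set E := MvPolynomial.coeff (mon 0 1 1) q with hE'
    set F := MvPolynomial.coeff (mon 0 0 2) q with hF'
    have hdec := homog2_decomp q hqh
    have haev : MvPolynomial.aeval ![(1 : ℂ⟦X⟧), PowerSeries.X, f] q
        = PowerSeries.C A + PowerSeries.C B * PowerSeries.X
          + PowerSeries.C Cc * f + PowerSeries.C D * PowerSeries.X ^ 2
          + PowerSeries.C E * (PowerSeries.X * f) + PowerSeries.C F * f ^ 2 := by
      conv_lhs => rw [hdec]
      simp only [map_add, aeval_mon]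
      ring
    have e0 := hqc 0 (by norm_num)
    have e1 := hqc 1 (by norm_num)
    have e2 := hqc 2 (by norm_num)
    have e3 := hqc 3 (by norm_num)
    have e4 := hqc 4 (by norm_num)
    have e5 := hqc 5 (by norm_num)
    rw [haev, hf] at e0 e1 e2 e3 e4 e5
    ring_nf at e0 e1 e2 e3 e4 e5
    simp only [map_add, map_mul, PowerSeries.coeff_mul_C, PowerSeries.coeff_C_mul, PowerSeries.coeff_C,
      PowerSeries.coeff_X_pow, PowerSeries.coeff_X, ← map_pow,
      (map_ofNat (PowerSeries.C (R := ℂ)) 2).symm] at e0 e1 e2 e3 e4 e5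
    norm_num at e0 e1 e2 e3 e4 e5
    -- e0 : A = 0, e1 : B = 0, etc.
    have hC0 : Cc = 0 := by
      have h : a2 * (2 * a3 ^ 3 - 3 * a2 * a3 * a4 + a2 ^ 2 * a5) * Cc = 0 := by
        linear_combination (2*a2*a3^2 - a2^2*a4) * e3 + (-(2*a2^2*a3)) * e4 + a2^3 * e5
      rcases mul_eq_zero.mp h with h' | h'
      · rcases mul_eq_zero.mp h' with h'' | h''
        · exact absurd h'' ha2
        · exact absurd h'' hμ
      · exact h'
    have hE0 : E = 0 := by
      have h : a2 * E = 0 := by linear_combination e3 - a3 * hC0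
      exact (mul_eq_zero.mp h).resolve_left ha2
    have hF0 : F = 0 := by
      have h : a2 ^ 2 * F = 0 := by linear_combination e4 - a4 * hC0 - a3 * hE0
      exact (mul_eq_zero.mp h).resolve_left (pow_ne_zero 2 ha2)
    have hD0 : D = 0 := by linear_combination e2 - a2 * hC0
    have hA0 : A = 0 := by linear_combination e0
    have hB0 : B = 0 := by linear_combination e1
    apply hq0
    rw [hdec, ← hA', ← hB', ← hC', ← hD', ← hE', ← hF', hA0, hB0, hC0, hD0, hE0, hF0]
    simp
  · intro hμ
    refine ⟨MvPolynomial.monomial (mon 1 0 1) (a2 ^ 3)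
      + MvPolynomial.monomial (mon 0 2 0) (-(a2 ^ 4))
      + MvPolynomial.monomial (mon 0 1 1) (-(a2 ^ 2 * a3))
      + MvPolynomial.monomial (mon 0 0 2) (a3 ^ 2 - a2 * a4), ?_, ?_, ?_⟩
    · intro h
      have := congrArg (MvPolynomial.coeff (mon 1 0 1)) h
      simp only [MvPolynomial.coeff_add, MvPolynomial.coeff_monomial,
        MvPolynomial.coeff_zero, mon_inj_iff] at this
      norm_num at this
      exact ha2 this
    · exact (((MvPolynomial.isHomogeneous_monomial _ (by rw [mon_degree])).add
        (MvPolynomial.isHomogeneous_monomial _ (by rw [mon_degree]))).add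
        (MvPolynomial.isHomogeneous_monomial _ (by rw [mon_degree]))).add
        (MvPolynomial.isHomogeneous_monomial _ (by rw [mon_degree]))
    · intro j hj
      have haev : MvPolynomial.aeval ![(1 : ℂ⟦X⟧), PowerSeries.X, f]
          (MvPolynomial.monomial (mon 1 0 1) (a2 ^ 3)
            + MvPolynomial.monomial (mon 0 2 0) (-(a2 ^ 4))
            + MvPolynomial.monomial (mon 0 1 1) (-(a2 ^ 2 * a3))
            + MvPolynomial.monomial (mon 0 0 2) (a3 ^ 2 - a2 * a4))
          = PowerSeries.C (a2 ^ 3) * f + PowerSeries.C (-(a2 ^ 4)) * PowerSeries.X ^ 2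
            + PowerSeries.C (-(a2 ^ 2 * a3)) * (PowerSeries.X * f)
            + PowerSeries.C (a3 ^ 2 - a2 * a4) * f ^ 2 := by
        simp only [map_add, aeval_mon]
        ring
      rw [haev]
      have hexp : PowerSeries.C (a2 ^ 3) * f + PowerSeries.C (-(a2 ^ 4)) * PowerSeries.X ^ 2
            + PowerSeries.C (-(a2 ^ 2 * a3)) * (PowerSeries.X * f)
            + PowerSeries.C (a3 ^ 2 - a2 * a4) * f ^ 2
          = PowerSeries.C (a2 * (2 * a3 ^ 3 - 3 * a2 * a3 * a4 + a2 ^ 2 * a5)) * X ^ 5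
            + (PowerSeries.C (-(a2 ^ 2 * a3 * a5) + (a3 ^ 2 - a2 * a4) * (2 * a2 * a4 + a3 ^ 2)) * X ^ 6
            + PowerSeries.C ((a3 ^ 2 - a2 * a4) * (2 * a2 * a5 + 2 * a3 * a4)) * X ^ 7
            + PowerSeries.C ((a3 ^ 2 - a2 * a4) * (2 * a3 * a5 + a4 ^ 2)) * X ^ 8
            + PowerSeries.C ((a3 ^ 2 - a2 * a4) * (2 * a4 * a5)) * X ^ 9
            + PowerSeries.C ((a3 ^ 2 - a2 * a4) * a5 ^ 2) * X ^ 10) := by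
        rw [hf]
        simp only [map_mul, map_pow, map_sub, map_neg, map_add, map_ofNat]
        ring
      rw [hexp, hμ, mul_zero, map_zero, zero_mul, zero_add]
      exact coeff_lt_six _ _ _ _ _ j hj
end
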